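/- arXiv:2103.02919 — 12 statements merged into one kernel-verified Lean document; each statement's English description precedes it below -/
import Mathlib

section
/- Let X, Y, P, Z be lists over an alphabet and let c be a character. Suppose X = X' ++ [c], Y = Y' ++ [c], P = P' ++ [c], and Z is a constrained longest common subsequence of X and Y with respect to P. Then Z ends in c, i.e. Z = Z' ++ [c] for some list Z', and Z' is a constrained longest common subsequence of X' and Y' with respect to P'. -/
/-- `Z` is a constrained common subsequence of `X` and `Y` with respect to `P`:
`Z` is a sublist (subsequence) of both `X` and `Y`, and `P` is a sublist of `Z`. -/
def CCS {α : Type*} (X Y P Z : List α) : Prop :=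
  Z.Sublist X ∧ Z.Sublist Y ∧ P.Sublist Z

/-- `Z` is a constrained longest common subsequence of `X` and `Y` with respect to `P`. -/
def CLCS {α : Type*} (X Y P Z : List α) : Prop :=
  CCS X Y P Z ∧ ∀ W : List α, CCS X Y P W → W.length ≤ Z.length

/-- The maximum length of a constrained common subsequence of `X` and `Y`
with respect to `P` (meaningful when some CCS exists). -/
noncomputable def clcsLen {α : Type*} (X Y P : List α) : ℕ :=
  sSup {n | ∃ Z : List α, CCS X Y P Z ∧ Z.length = n}

theorem clcs_both_end_match {α : Type*} (X Y P Z X' Y' P' : List α) (c : α)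
    (hX : X = X' ++ [c]) (hY : Y = Y' ++ [c]) (hP : P = P' ++ [c])
    (hZ : CLCS X Y P Z) :
    ∃ Z' : List α, Z = Z' ++ [c] ∧ CLCS X' Y' P' Z' := by
  subst hX hY hP
  obtain ⟨⟨hZX, hZY, hPZ⟩, hmax⟩ := hZ
  -- Z ends in c
  have key : ∃ Z', Z = Z' ++ [c] := by
    rw [List.sublist_append_iff] at hZX
    obtain ⟨l₁, l₂, rfl, h₁, h₂⟩ := hZX
    rcases List.sublist_singleton.mp h₂ with rfl | rfl
    · -- l₂ = [], so Z = l₁ <+ X'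
      simp only [List.append_nil] at hZY hPZ hmax ⊢
      rw [List.sublist_append_iff] at hZY
      obtain ⟨m₁, m₂, he, g₁, g₂⟩ := hZY
      rcases List.sublist_singleton.mp g₂ with rfl | rfl
      · -- l₁ <+ Y' too: contradiction with maximality
        exfalso
        simp only [List.append_nil] at he
        subst he
        have hW : CCS (X' ++ [c]) (Y' ++ [c]) (P' ++ [c]) (l₁ ++ [c]) :=
          ⟨(List.append_sublist_append_right _).mpr h₁,
           (List.append_sublist_append_right _).mpr g₁,
           (List.append_sublist_append_right _).mpr ((List.sublist_append_left P' [c]).trans hPZ)⟩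
        have := hmax _ hW
        simp at this
      · exact ⟨m₁, he⟩
    · exact ⟨l₁, rfl⟩
  obtain ⟨Z', rfl⟩ := key
  refine ⟨Z', rfl, ⟨⟨?_, ?_, ?_⟩, ?_⟩⟩
  · exact (List.append_sublist_append_right _).mp hZX
  · exact (List.append_sublist_append_right _).mp hZY
  · exact (List.append_sublist_append_right _).mp hPZ
  · intro W hW
    obtain ⟨hWX, hWY, hPW⟩ := hW
    have := hmax (W ++ [c]) ⟨(List.append_sublist_append_right _).mpr hWX,
      (List.append_sublist_append_right _).mpr hWY,
      (List.append_sublist_append_right _).mpr hPW⟩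
    simpa using this
end

section
/- Let X, Y, P, Z be lists over an alphabet and let c be a character. Suppose X = X' ++ [c], Y = Y' ++ [c], P does not end in c (i.e. P is empty or P = P'' ++ [p] with p ≠ c), and Z is a constrained longest common subsequence of X and Y with respect to P. Then Z ends in c, i.e. Z = Z' ++ [c] for some list Z', and Z' is a constrained longest common subsequence of X' and Y' with respect to P. -/
private lemma sub_concat_cases {α : Type*} {l r : List α} {c : α}
    (h : l.Sublist (r ++ [c])) : l.Sublist r ∨ ∃ l', l = l' ++ [c] := by
  rw [List.sublist_append_iff] at h
  obtain ⟨l₁, l₂, rfl, h₁, h₂⟩ := h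
  rcases List.sublist_singleton.mp h₂ with rfl | rfl
  · left; simpa using h₁
  · right; exact ⟨l₁, rfl⟩

private lemma concat_sub_concat {α : Type*} {l r : List α} {c : α}
    (h : (l ++ [c]).Sublist (r ++ [c])) : l.Sublist r := by
  have := h.reverse
  simp only [List.reverse_append, List.reverse_singleton, List.singleton_append,
    List.cons_sublist_cons] at this
  simpa using this.reverse

theorem clcs_match_not_constraint {α : Type*} (X Y P Z X' Y' : List α) (c : α)
    (hX : X = X' ++ [c]) (hY : Y = Y' ++ [c])
    (hP : P = [] ∨ ∃ (P'' : List α) (p : α), P = P'' ++ [p] ∧ p ≠ c)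
    (hZ : CLCS X Y P Z) :
    ∃ Z' : List α, Z = Z' ++ [c] ∧ CLCS X' Y' P Z' := by
  subst hX hY
  obtain ⟨⟨hZX, hZY, hPZ⟩, hmax⟩ := hZ
  -- First show Z ends in c
  have hend : ∃ Z', Z = Z' ++ [c] := by
    rcases sub_concat_cases hZX with hX' | h
    · rcases sub_concat_cases hZY with hY' | h
      · -- Z <+ X' and Z <+ Y'; then Z ++ [c] is a longer CCS, contradiction
        exfalso
        have hccs : CCS (X' ++ [c]) (Y' ++ [c]) P (Z ++ [c]) :=
          ⟨hX'.append (List.Sublist.refl _), hY'.append (List.Sublist.refl _),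
            hPZ.trans (List.sublist_append_left _ _)⟩
        have := hmax _ hccs
        simp at this
      · exact h
    · exact h
  obtain ⟨Z', rfl⟩ := hend
  refine ⟨Z', rfl, ⟨⟨concat_sub_concat hZX, concat_sub_concat hZY, ?_⟩, ?_⟩⟩
  · -- P <+ Z' since P doesn't end in c
    rcases sub_concat_cases hPZ with h | ⟨P₁, hP₁⟩
    · exact h
    · exfalso
      rcases hP with rfl | ⟨P'', p, rfl, hpc⟩
      · exact (List.append_ne_nil_of_right_ne_nil P₁ (by simp) hP₁.symm)
      · have : p = c := by
          have := congrArg List.getLast? hP₁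
          simpa using this
        exact hpc this
  · intro W ⟨hWX, hWY, hPW⟩
    have hccs : CCS (X' ++ [c]) (Y' ++ [c]) P (W ++ [c]) :=
      ⟨hWX.append (List.Sublist.refl _), hWY.append (List.Sublist.refl _),
        hPW.trans (List.sublist_append_left _ _)⟩
    have := hmax _ hccs
    simpa using this
end

section
/- Let X, Y, P, Z be lists over an alphabet and let x, y be characters with x ≠ y. Suppose X = X' ++ [x], Z is a constrained longest common subsequence of X and Y with respect to P, and Z does not end in x (i.e. Z is empty or Z = Z'' ++ [z] with z ≠ x). Then Z is a constrained longest common subsequence of X' and Y with respect to P. -/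
theorem clcs_drop_last_left {α : Type*} (X Y P Z X' : List α) (x y : α)
    (hxy : x ≠ y) (hX : X = X' ++ [x])
    (hZ : CLCS X Y P Z)
    (hlast : Z = [] ∨ ∃ (Z'' : List α) (z : α), Z = Z'' ++ [z] ∧ z ≠ x) :
    CLCS X' Y P Z := by
  obtain ⟨⟨hZX, hZY, hPZ⟩, hmax⟩ := hZ
  subst hX
  have hZX' : Z.Sublist X' := by
    rcases (List.sublist_append_iff.mp hZX : _) with ⟨l₁, l₂, rfl, h1, h2⟩
    · rcases List.sublist_singleton.mp h2 with rfl | rfl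
      · simpa using h1
      · rcases hlast with h | ⟨Z'', z, hzz, hne⟩
        · simp at h
        · have : z = x := by
            have := congrArg List.getLast? hzz
            simp at this
            exact this.symm
          exact absurd this hne
  refine ⟨⟨hZX', hZY, hPZ⟩, fun W ⟨hWX, hWY, hPW⟩ => ?_⟩
  exact hmax W ⟨hWX.trans (List.sublist_append_left _ _), hWY, hPW⟩
end

section
/- Let X, Y, P, Z be lists over an alphabet and let x, y be characters with x ≠ y. Suppose Y = Y' ++ [y], Z is a constrained longest common subsequence of X and Y with respect to P, and Z does not end in y (i.e. Z is empty or Z = Z'' ++ [z] with z ≠ y). Then Z is a constrained longest common subsequence of X and Y' with respect to P. -/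
theorem clcs_drop_last_right {α : Type*} (X Y P Z Y' : List α) (x y : α)
    (hxy : x ≠ y) (hY : Y = Y' ++ [y])
    (hZ : CLCS X Y P Z)
    (hlast : Z = [] ∨ ∃ (Z'' : List α) (z : α), Z = Z'' ++ [z] ∧ z ≠ y) :
    CLCS X Y' P Z := by
  obtain ⟨⟨h1, h2, h3⟩, hmax⟩ := hZ
  have hZY' : Z.Sublist Y' := by
    rw [hY, List.sublist_append_iff] at h2
    obtain ⟨Z1, Z2, rfl, hZ1, hZ2⟩ := h2
    have : Z2 = [] ∨ Z2 = [y] := by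
      cases hZ2 with
      | cons _ h => left; exact List.sublist_nil.mp h
      | cons_cons _ h => right; rw [List.sublist_nil.mp h]
    rcases this with rfl | rfl
    · simpa using hZ1
    · rcases hlast with h | ⟨Z'', z, heq, hz⟩
      · simp at h
      · have : z = y := by
          have := congrArg List.getLast? heq.symm
          simp at this
          exact this
        exact absurd this hz
  exact ⟨⟨h1, hZY', h3⟩, fun W ⟨w1, w2, w3⟩ =>
    hmax W ⟨w1, w2.trans (by rw [hY]; exact List.sublist_append_left _ _), w3⟩⟩
end

section
/- Let X', Y', P' be lists over an alphabet and let c be a character. If P' is a subsequence of both X' and Y', then clcsLen (X' ++ [c]) (Y' ++ [c]) (P' ++ [c]) = 1 + clcsLen X' Y' P'. -/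
private lemma ccs_bdd {α : Type*} (X Y P : List α) :
    BddAbove {n | ∃ Z : List α, CCS X Y P Z ∧ Z.length = n} := by
  refine ⟨X.length, fun n hn => ?_⟩
  obtain ⟨Z, ⟨hZX, _, _⟩, rfl⟩ := hn
  exact hZX.length_le

private lemma dropLast_sub {α : Type*} {W X : List α} {c : α}
    (h : W.Sublist (X ++ [c])) : W.dropLast.Sublist X := by
  rw [List.sublist_append_iff] at h
  obtain ⟨l₁, l₂, rfl, h₁, h₂⟩ := h
  rcases List.sublist_singleton.mp (by simpa using h₂) with rfl | rfl
  · simpa using (List.dropLast_sublist l₁).trans h₁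
  · rw [List.dropLast_concat]; exact h₁

theorem clcsLen_append_match_constraint {α : Type*} (X' Y' P' : List α) (c : α)
    (h1 : P'.Sublist X') (h2 : P'.Sublist Y') :
    clcsLen (X' ++ [c]) (Y' ++ [c]) (P' ++ [c]) = 1 + clcsLen X' Y' P' := by
  set S := {n | ∃ Z : List α, CCS X' Y' P' Z ∧ Z.length = n} with hS
  set T := {n | ∃ Z : List α, CCS (X' ++ [c]) (Y' ++ [c]) (P' ++ [c]) Z ∧ Z.length = n} with hT
  have hSne : S.Nonempty := ⟨P'.length, P', ⟨h1, h2, List.Sublist.refl _⟩, rfl⟩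
  have hTne : T.Nonempty :=
    ⟨(P' ++ [c]).length, P' ++ [c],
      ⟨h1.append (List.Sublist.refl _), h2.append (List.Sublist.refl _), List.Sublist.refl _⟩, rfl⟩
  have hSb := ccs_bdd X' Y' P'
  have hTb := ccs_bdd (X' ++ [c]) (Y' ++ [c]) (P' ++ [c])
  apply le_antisymm
  · -- sSup T ≤ 1 + sSup S
    obtain ⟨W, ⟨hWX, hWY, hPW⟩, hlen⟩ := Nat.sSup_mem hTne hTb
    have hZX : W.dropLast.Sublist X' := dropLast_sub hWX
    have hZY : W.dropLast.Sublist Y' := dropLast_sub hWY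
    have hPZ : P'.Sublist W.dropLast := by
      rw [List.append_sublist_iff] at hPW
      obtain ⟨l₁, l₂, hW, h₁, h₂⟩ := hPW
      have hl₂ : l₂ ≠ [] := by
        intro h; rw [h] at h₂; exact absurd h₂.length_le (by simp)
      have : l₁.Sublist W.dropLast := by
        rw [hW, List.dropLast_append_of_ne_nil hl₂]
        exact List.sublist_append_left _ _
      exact h₁.trans this
    have hmem : W.dropLast.length ∈ S := ⟨W.dropLast, ⟨hZX, hZY, hPZ⟩, rfl⟩
    have : W.dropLast.length ≤ sSup S := le_csSup hSb hmem
    calc clcsLen (X' ++ [c]) (Y' ++ [c]) (P' ++ [c]) = W.length := hlen.symm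
      _ ≤ W.dropLast.length + 1 := by
          rw [List.length_dropLast]; omega
      _ ≤ sSup S + 1 := by omega
      _ = 1 + clcsLen X' Y' P' := by rw [Nat.add_comm]; rfl
  · -- 1 + sSup S ≤ sSup T
    obtain ⟨Z, ⟨hZX, hZY, hPZ⟩, hlen⟩ := Nat.sSup_mem hSne hSb
    have hmem : (Z ++ [c]).length ∈ T :=
      ⟨Z ++ [c], ⟨hZX.append (List.Sublist.refl _), hZY.append (List.Sublist.refl _),
        hPZ.append (List.Sublist.refl _)⟩, rfl⟩
    have := le_csSup hTb hmem
    simp only [List.length_append, List.length_cons, List.length_nil] at this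
    calc 1 + clcsLen X' Y' P' = Z.length + 1 := by rw [Nat.add_comm]; rw [hlen]; rfl
      _ ≤ sSup T := this
      _ = clcsLen (X' ++ [c]) (Y' ++ [c]) (P' ++ [c]) := rfl
end

section
/- Let X', Y', P be lists over an alphabet and let c be a character such that P does not end in c (i.e. P is empty or P = P'' ++ [p] with p ≠ c). If P is a subsequence of both X' ++ [c] and Y' ++ [c], then P is a subsequence of both X' and Y', and clcsLen (X' ++ [c]) (Y' ++ [c]) P = 1 + clcsLen X' Y' P. -/
/-- Decomposition of a sublist of `R ++ [c]`. -/
lemma sublist_concat_decomp {α : Type*} {Z R : List α} {c : α} (h : Z.Sublist (R ++ [c])) :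
    Z.Sublist R ∨ ∃ T, Z = T ++ [c] ∧ T.Sublist R := by
  rcases List.sublist_append_iff.mp h with ⟨l₁, l₂, rfl, h₁, h₂⟩
  rcases List.sublist_singleton.mp h₂ with rfl | rfl
  · exact Or.inl (by simpa using h₁)
  · exact Or.inr ⟨l₁, rfl, h₁⟩

lemma sublist_of_not_end {α : Type*} {Z R : List α} {c : α}
    (hne : Z = [] ∨ ∃ (Z' : List α) (p : α), Z = Z' ++ [p] ∧ p ≠ c)
    (h : Z.Sublist (R ++ [c])) : Z.Sublist R := by
  rcases sublist_concat_decomp h with h' | ⟨T, hT, hTR⟩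
  · exact h'
  · rcases hne with rfl | ⟨Z', p, hZ, hp⟩
    · simp at hT
    · rw [hZ] at hT
      obtain ⟨rfl, he⟩ := List.append_inj' hT (by simp)
      simp_all

theorem clcsLen_append_match_no_constraint {α : Type*} (X' Y' P : List α) (c : α)
    (hP : P = [] ∨ ∃ (P'' : List α) (p : α), P = P'' ++ [p] ∧ p ≠ c)
    (h1 : P.Sublist (X' ++ [c])) (h2 : P.Sublist (Y' ++ [c])) :
    P.Sublist X' ∧ P.Sublist Y' ∧
    clcsLen (X' ++ [c]) (Y' ++ [c]) P = 1 + clcsLen X' Y' P := by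
  have hPX : P.Sublist X' := sublist_of_not_end hP h1
  have hPY : P.Sublist Y' := sublist_of_not_end hP h2
  refine ⟨hPX, hPY, ?_⟩
  set S : Set ℕ := {n | ∃ Z : List α, CCS X' Y' P Z ∧ Z.length = n} with hS
  set S' : Set ℕ := {n | ∃ Z : List α, CCS (X' ++ [c]) (Y' ++ [c]) P Z ∧ Z.length = n} with hS'
  have hSne : S.Nonempty := ⟨P.length, P, ⟨hPX, hPY, List.Sublist.refl P⟩, rfl⟩
  have hSbdd : BddAbove S := by
    refine ⟨X'.length, fun n hn => ?_⟩
    obtain ⟨Z, ⟨hZX, _, _⟩, rfl⟩ := hn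
    exact hZX.length_le
  have hS'bdd : BddAbove S' := by
    refine ⟨X'.length + 1, fun n hn => ?_⟩
    obtain ⟨Z, ⟨hZX, _, _⟩, rfl⟩ := hn
    simpa using hZX.length_le
  -- Key: any element of S' is either ≤ sSup S, or equals 1 + (something in S)
  have key : ∀ n ∈ S', n ≤ 1 + sSup S := by
    rintro n ⟨Z, ⟨hZX, hZY, hPZ⟩, rfl⟩
    rcases sublist_concat_decomp hZX with hZX' | ⟨T, rfl, hTX⟩
    · rcases sublist_concat_decomp hZY with hZY' | ⟨T, rfl, hTY⟩
      · have : Z.length ∈ S := ⟨Z, ⟨hZX', hZY', hPZ⟩, rfl⟩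
        have := le_csSup hSbdd this
        omega
      · -- Z = T ++ [c], T <+ Y', and Z <+ X' so T <+ X'
        have hTX' : T.Sublist X' := ((T.sublist_append_left [c]).trans hZX')
        have hPT : P.Sublist T := sublist_of_not_end hP hPZ
        have : T.length ∈ S := ⟨T, ⟨hTX', hTY, hPT⟩, rfl⟩
        have := le_csSup hSbdd this
        simp only [List.length_append, List.length_singleton]
        omega
    · -- Z = T ++ [c], T <+ X'
      have hTY : T.Sublist Y' := by
        rcases sublist_concat_decomp hZY with hZY' | ⟨W, hW, hWY⟩
        · exact (T.sublist_append_left [c]).trans hZY'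
        · obtain ⟨rfl, -⟩ := List.append_inj' hW (by simp)
          exact hWY
      have hPT : P.Sublist T := sublist_of_not_end hP hPZ
      have : T.length ∈ S := ⟨T, ⟨hTX, hTY, hPT⟩, rfl⟩
      have := le_csSup hSbdd this
      simp only [List.length_append, List.length_singleton]
      omega
  have hle : clcsLen (X' ++ [c]) (Y' ++ [c]) P ≤ 1 + clcsLen X' Y' P := by
    refine csSup_le ?_ key
    exact ⟨P.length, P, ⟨h1, h2, List.Sublist.refl P⟩, rfl⟩
  have hge : 1 + clcsLen X' Y' P ≤ clcsLen (X' ++ [c]) (Y' ++ [c]) P := by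
    have hmem : sSup S ∈ S := Nat.sSup_mem hSne hSbdd
    obtain ⟨Z, ⟨hZX, hZY, hPZ⟩, hlen⟩ := hmem
    have : (1 + sSup S) ∈ S' := by
      refine ⟨Z ++ [c], ⟨hZX.append (List.Sublist.refl [c]),
        hZY.append (List.Sublist.refl [c]), hPZ.trans (Z.sublist_append_left [c])⟩, ?_⟩
      simp [hlen, Nat.add_comm]
    exact le_csSup hS'bdd this
  exact le_antisymm hle hge
end

section
/- Let X, Y, P be lists over an alphabet with X = X' ++ [x] and Y = Y' ++ [y] for characters x ≠ y, and suppose Z is a constrained longest common subsequence of X and Y with respect to P. Then Z is a constrained longest common subsequence of X' and Y with respect to P, or Z is a constrained longest common subsequence of X and Y' with respect to P. -/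
lemma sublist_concat_cases {α : Type*} (Z L : List α) (a : α) (h : Z.Sublist (L ++ [a])) :
    Z.Sublist L ∨ ∃ Z', Z = Z' ++ [a] := by
  rw [List.sublist_append_iff] at h
  obtain ⟨u, v, rfl, hu, hv⟩ := h
  rcases List.sublist_singleton.mp hv with rfl | rfl
  · exact Or.inl (by simpa using hu)
  · exact Or.inr ⟨u, rfl⟩

theorem clcs_mismatch_cases {α : Type*} (X Y P Z X' Y' : List α) (x y : α)
    (hxy : x ≠ y) (hX : X = X' ++ [x]) (hY : Y = Y' ++ [y])
    (hZ : CLCS X Y P Z) :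
    CLCS X' Y P Z ∨ CLCS X Y' P Z := by
  obtain ⟨⟨hZX, hZY, hPZ⟩, hmax⟩ := hZ
  rcases sublist_concat_cases Z X' x (hX ▸ hZX) with hX' | ⟨Z₁, hZ₁⟩
  · left
    refine ⟨⟨hX', hZY, hPZ⟩, fun W ⟨hW1, hW2, hW3⟩ => ?_⟩
    exact hmax W ⟨hW1.trans (by rw [hX]; exact List.sublist_append_left _ _), hW2, hW3⟩
  · rcases sublist_concat_cases Z Y' y (hY ▸ hZY) with hY' | ⟨Z₂, hZ₂⟩
    · right
      refine ⟨⟨hZX, hY', hPZ⟩, fun W ⟨hW1, hW2, hW3⟩ => ?_⟩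
      exact hmax W ⟨hW1, hW2.trans (by rw [hY]; exact List.sublist_append_left _ _), hW3⟩
    · exfalso
      apply hxy
      have := hZ₁ ▸ hZ₂
      have h1 := congrArg (fun l => l.getLast?) this
      simpa using h1
end

section
/- Let X, Y, P be lists over an alphabet with X = X' ++ [x] and Y = Y' ++ [y] for characters x ≠ y, and suppose P is a subsequence of both X and Y. Then clcsLen X Y P equals the maximum of clcsLen X' Y P (taken into account only when P is a subsequence of both X' and Y) and clcsLen X Y' P (taken into account only when P is a subsequence of both X and Y'); moreover at least one of these two cases applies. -/
private lemma aux_cons {α : Type*} {z x : α} {a b : List α}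
    (h : (z :: a).Sublist (x :: b)) (hne : z ≠ x) : (z :: a).Sublist b := by
  cases h with
  | cons _ h => exact h
  | cons_cons => exact absurd rfl hne

private lemma aux_concat {α : Type*} {z x : α} {a b : List α}
    (h : (a ++ [z]).Sublist (b ++ [x])) (hne : z ≠ x) : (a ++ [z]).Sublist b := by
  have h' : (z :: a.reverse).Sublist (x :: b.reverse) := by
    have := List.reverse_sublist.mpr h
    simpa using this
  have h2 := List.sublist_reverse_iff.mp (aux_cons h' hne)
  simpa using h2

private lemma split_key {α : Type*} {x y : α} (hxy : x ≠ y) {Z X' Y' : List α}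
    (hx : Z.Sublist (X' ++ [x])) (hy : Z.Sublist (Y' ++ [y])) :
    Z.Sublist X' ∨ Z.Sublist Y' := by
  induction Z using List.reverseRecOn with
  | nil => exact Or.inl (List.nil_sublist _)
  | append_singleton l z _ =>
    by_cases hzx : z = x
    · subst hzx
      exact Or.inr (aux_concat hy hxy)
    · exact Or.inl (aux_concat hx hzx)

private lemma clcsLen_spec {α : Type*} {X Y P : List α}
    (hx : P.Sublist X) (hy : P.Sublist Y) :
    (∃ Z : List α, CCS X Y P Z ∧ Z.length = clcsLen X Y P) ∧
      ∀ W : List α, CCS X Y P W → W.length ≤ clcsLen X Y P := by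
  set s : Set ℕ := {n | ∃ Z : List α, CCS X Y P Z ∧ Z.length = n} with hs
  have hbdd : BddAbove s := by
    refine ⟨X.length, fun n hn => ?_⟩
    obtain ⟨Z, hZ, rfl⟩ := hn
    exact hZ.1.length_le
  have hne : s.Nonempty := ⟨P.length, P, ⟨hx, hy, List.Sublist.refl P⟩, rfl⟩
  constructor
  · exact Nat.sSup_mem hne hbdd
  · intro W hW
    exact le_csSup hbdd ⟨W, hW, rfl⟩

theorem clcsLen_mismatch {α : Type*} (X Y P X' Y' : List α) (x y : α)
    (hxy : x ≠ y) (hX : X = X' ++ [x]) (hY : Y = Y' ++ [y])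
    (h1 : P.Sublist X) (h2 : P.Sublist Y) :
    ((P.Sublist X' ∧ P.Sublist Y) ∨ (P.Sublist X ∧ P.Sublist Y')) ∧
    ((P.Sublist X' ∧ P.Sublist Y) → (P.Sublist X ∧ P.Sublist Y') →
      clcsLen X Y P = max (clcsLen X' Y P) (clcsLen X Y' P)) ∧
    ((P.Sublist X' ∧ P.Sublist Y) → ¬(P.Sublist X ∧ P.Sublist Y') →
      clcsLen X Y P = clcsLen X' Y P) ∧
    (¬(P.Sublist X' ∧ P.Sublist Y) → (P.Sublist X ∧ P.Sublist Y') →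
      clcsLen X Y P = clcsLen X Y' P) := by
  subst hX hY
  have hsplitP := split_key hxy h1 h2
  have hX'X : X'.Sublist (X' ++ [x]) := List.sublist_append_left _ _
  have hY'Y : Y'.Sublist (Y' ++ [y]) := List.sublist_append_left _ _
  -- any CCS of (X'++[x], Y'++[y]) is a CCS of (X', Y'++[y]) or (X'++[x], Y')
  have hsplit : ∀ Z : List α, CCS (X' ++ [x]) (Y' ++ [y]) P Z →
      CCS X' (Y' ++ [y]) P Z ∨ CCS (X' ++ [x]) Y' P Z := by
    intro Z ⟨hZx, hZy, hPZ⟩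
    rcases split_key hxy hZx hZy with h | h
    · exact Or.inl ⟨h, hZy, hPZ⟩
    · exact Or.inr ⟨hZx, h, hPZ⟩
  have main := clcsLen_spec h1 h2
  obtain ⟨⟨Z, hZ, hZlen⟩, hZmax⟩ := main
  refine ⟨?_, ?_, ?_, ?_⟩
  · rcases hsplitP with h | h
    · exact Or.inl ⟨h, h2⟩
    · exact Or.inr ⟨h1, h⟩
  · rintro ⟨ha1, ha2⟩ ⟨hb1, hb2⟩
    have specL := clcsLen_spec ha1 ha2
    have specR := clcsLen_spec hb1 hb2
    apply le_antisymm
    · rw [← hZlen]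
      rcases hsplit Z hZ with h | h
      · exact le_max_of_le_left (specL.2 Z h)
      · exact le_max_of_le_right (specR.2 Z h)
    · apply max_le
      · obtain ⟨⟨W, ⟨hW1, hW2, hW3⟩, hWlen⟩, _⟩ := specL
        rw [← hWlen]
        exact hZmax W ⟨hW1.trans hX'X, hW2, hW3⟩
      · obtain ⟨⟨W, ⟨hW1, hW2, hW3⟩, hWlen⟩, _⟩ := specR
        rw [← hWlen]
        exact hZmax W ⟨hW1, hW2.trans hY'Y, hW3⟩
  · rintro ⟨ha1, ha2⟩ hb
    have hnPY' : ¬ P.Sublist Y' := fun h => hb ⟨h1, h⟩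
    have specL := clcsLen_spec ha1 ha2
    apply le_antisymm
    · rw [← hZlen]
      rcases hsplit Z hZ with h | h
      · exact specL.2 Z h
      · exact absurd (hZ.2.2.trans h.2.1) hnPY'
    · obtain ⟨⟨W, ⟨hW1, hW2, hW3⟩, hWlen⟩, _⟩ := specL
      rw [← hWlen]
      exact hZmax W ⟨hW1.trans hX'X, hW2, hW3⟩
  · rintro ha ⟨hb1, hb2⟩
    have hnPX' : ¬ P.Sublist X' := fun h => ha ⟨h, h2⟩
    have hb2' : P.Sublist (Y' ++ [y]) := hb2.trans hY'Y
    have specR := clcsLen_spec hb1 hb2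
    apply le_antisymm
    · rw [← hZlen]
      rcases hsplit Z hZ with h | h
      · exact absurd (hZ.2.2.trans h.1) hnPX'
      · exact specR.2 Z h
    · obtain ⟨⟨W, ⟨hW1, hW2, hW3⟩, hWlen⟩, _⟩ := specR
      rw [← hWlen]
      exact hZmax W ⟨hW1, hW2.trans hY'Y, hW3⟩
end

section
/- Let (X', Y') be a constrained alignment of X and Y with respect to P, and let M be the list of matching-column characters of (X', Y'). Then P is a subsequence of M, M is a constrained common subsequence of X and Y with respect to P, and the alignment score of (X', Y') under the distance function δ (δ(a,b) = -1 if a = b and 0 otherwise) equals the negative of the length of M. -/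
/-- `(X', Y')` is an alignment of `X` and `Y`: equal lengths, removing the spaces
(`none` entries) gives back `X` resp. `Y`, and no column consists of two spaces. -/
def IsAlignment {σ : Type*} (X Y : List σ) (X' Y' : List (Option σ)) : Prop :=
  X'.length = Y'.length ∧
  X'.filterMap id = X ∧
  Y'.filterMap id = Y ∧
  ∀ p ∈ X'.zip Y', ¬(p.1 = none ∧ p.2 = none)

/-- The list of matching-column characters of an alignment. -/
def matchCols {σ : Type*} [DecidableEq σ] (X' Y' : List (Option σ)) : List σ :=
  (X'.zip Y').filterMap (fun p => if p.1 = p.2 then p.1 else none)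

/-- `(X', Y')` is a constrained alignment of `X` and `Y` with respect to `P`. -/
def IsConstrainedAlignment {σ : Type*} [DecidableEq σ] (X Y P : List σ)
    (X' Y' : List (Option σ)) : Prop :=
  IsAlignment X Y X' Y' ∧ P.Sublist (matchCols X' Y')

/-- The alignment score of `(X', Y')` under a distance function `δ`. -/
def score {σ : Type*} (δ : Option σ → Option σ → ℤ) (X' Y' : List (Option σ)) : ℤ :=
  ((X'.zip Y').map (fun p => δ p.1 p.2)).sum

/-- The distance function: `-1` on a match, `0` otherwise. -/
def delta {σ : Type*} [DecidableEq σ] (a b : Option σ) : ℤ :=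
  if a = b then -1 else 0

lemma matchCols_cons {σ : Type*} [DecidableEq σ] (a b : Option σ)
    (X' Y' : List (Option σ)) :
    matchCols (a :: X') (b :: Y') =
      (if a = b then a.toList else []) ++ matchCols X' Y' := by
  by_cases hab : a = b
  · subst hab
    cases a <;> simp [matchCols, List.zip_cons_cons, List.filterMap_cons]
  · simp [matchCols, List.zip_cons_cons, List.filterMap_cons, hab]

lemma matchCols_sublist_left {σ : Type*} [DecidableEq σ] :
    ∀ (X' Y' : List (Option σ)), (matchCols X' Y').Sublist (X'.filterMap id)
  | [], Y' => by simp [matchCols]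
  | a :: X', [] => by simp [matchCols]
  | a :: X', b :: Y' => by
    rw [matchCols_cons, List.filterMap_cons]
    split <;> rename_i hab
    · subst hab
      cases a <;> simpa using matchCols_sublist_left X' Y'
    · cases a <;> simp
      · exact matchCols_sublist_left X' Y'
      · exact (matchCols_sublist_left X' Y').trans (List.sublist_cons_self _ _)

lemma matchCols_sublist_right {σ : Type*} [DecidableEq σ] :
    ∀ (X' Y' : List (Option σ)), (matchCols X' Y').Sublist (Y'.filterMap id)
  | [], Y' => by simp [matchCols]
  | a :: X', [] => by simp [matchCols]
  | a :: X', b :: Y' => by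
    rw [matchCols_cons, List.filterMap_cons]
    split <;> rename_i hab
    · subst hab
      cases a <;> simpa using matchCols_sublist_right X' Y'
    · cases b <;> simp
      · exact matchCols_sublist_right X' Y'
      · exact (matchCols_sublist_right X' Y').trans (List.sublist_cons_self _ _)

lemma score_eq_neg_matchCols {σ : Type*} [DecidableEq σ] :
    ∀ (X' Y' : List (Option σ)),
      (∀ p ∈ X'.zip Y', ¬(p.1 = none ∧ p.2 = none)) →
      score delta X' Y' = -((matchCols X' Y').length : ℤ)
  | [], Y', _ => by simp [score, matchCols]
  | a :: X', [], _ => by simp [score, matchCols]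
  | a :: X', b :: Y', h => by
    have ih := score_eq_neg_matchCols X' Y' (fun p hp => h p (by simp [hp]))
    rw [matchCols_cons]
    simp only [score, List.zip_cons_cons, List.map_cons, List.sum_cons] at *
    rw [ih, delta]
    split <;> rename_i hab
    · subst hab
      cases a with
      | none => exact absurd ⟨rfl, rfl⟩ (h (none, none) (by simp))
      | some c => simp
    · simp

theorem constrained_alignment_matchCols {σ : Type*} [DecidableEq σ]
    (X Y P : List σ) (X' Y' : List (Option σ))
    (h : IsConstrainedAlignment X Y P X' Y') :
    P.Sublist (matchCols X' Y') ∧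
    CCS X Y P (matchCols X' Y') ∧
    score delta X' Y' = -((matchCols X' Y').length : ℤ) := by
  obtain ⟨⟨hlen, hX, hY, hno⟩, hP⟩ := h
  refine ⟨hP, ⟨?_, ?_, hP⟩, score_eq_neg_matchCols X' Y' hno⟩
  · rw [← hX]; exact matchCols_sublist_left X' Y'
  · rw [← hY]; exact matchCols_sublist_right X' Y'
end

section
/- Let X, Y, P be lists over an alphabet with X = A ++ B, and let Z be a constrained common subsequence of X and Y with respect to P. Then there exist decompositions Y = C ++ D, P = Q ++ R, and Z = Z₁ ++ Z₂ such that Z₁ is a constrained common subsequence of A and C with respect to Q, and Z₂ is a constrained common subsequence of B and D with respect to R. -/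
theorem ccs_split {α : Type*} (X Y P Z A B : List α)
    (hX : X = A ++ B) (hZ : CCS X Y P Z) :
    ∃ C D Q R Z₁ Z₂ : List α,
      Y = C ++ D ∧ P = Q ++ R ∧ Z = Z₁ ++ Z₂ ∧
      CCS A C Q Z₁ ∧ CCS B D R Z₂ := by
  obtain ⟨h1, h2, h3⟩ := hZ
  subst hX
  rw [List.sublist_append_iff] at h1
  obtain ⟨Z₁, Z₂, hZ12, hA, hB⟩ := h1
  subst hZ12
  rw [List.append_sublist_iff] at h2
  obtain ⟨C, D, hY, hC, hD⟩ := h2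
  rw [List.sublist_append_iff] at h3
  obtain ⟨Q, R, hP, hQ, hR⟩ := h3
  exact ⟨C, D, Q, R, Z₁, Z₂, hY, hP, rfl, ⟨hA, hC, hQ⟩, ⟨hB, hD, hR⟩⟩
end

section
/- Let X, Y, P be lists over an alphabet with X = A ++ B, and suppose P is a subsequence of both X and Y. Then clcsLen X Y P equals the maximum, over all decompositions Y = C ++ D and P = Q ++ R such that Q is a subsequence of both A and C and R is a subsequence of both B and D, of clcsLen A C Q + clcsLen B D R; moreover at least one such decomposition exists. -/
lemma ccs_len_le {α : Type*} {X Y P Z : List α} (h : CCS X Y P Z) :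
    Z.length ≤ clcsLen X Y P := by
  apply le_csSup
  · exact ⟨X.length, fun n ⟨W, hW, hn⟩ => hn ▸ hW.1.length_le⟩
  · exact ⟨Z, h, rfl⟩

lemma exists_clcs {α : Type*} {X Y P : List α} (h1 : P.Sublist X) (h2 : P.Sublist Y) :
    ∃ Z, CCS X Y P Z ∧ Z.length = clcsLen X Y P :=
  Nat.sSup_mem (s := {n | ∃ Z, CCS X Y P Z ∧ Z.length = n})
    ⟨P.length, P, ⟨h1, h2, List.Sublist.refl P⟩, rfl⟩
    ⟨X.length, fun n ⟨W, hW, hn⟩ => hn ▸ hW.1.length_le⟩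

theorem clcsLen_split {α : Type*} (X Y P A B : List α)
    (hX : X = A ++ B) (h1 : P.Sublist X) (h2 : P.Sublist Y) :
    (∃ C D Q R : List α, Y = C ++ D ∧ P = Q ++ R ∧
        Q.Sublist A ∧ Q.Sublist C ∧ R.Sublist B ∧ R.Sublist D) ∧
    clcsLen X Y P =
      sSup {n : ℕ | ∃ C D Q R : List α, Y = C ++ D ∧ P = Q ++ R ∧
        Q.Sublist A ∧ Q.Sublist C ∧ R.Sublist B ∧ R.Sublist D ∧
        n = clcsLen A C Q + clcsLen B D R} := by
  subst hX
  -- existence of a decomposition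
  obtain ⟨Q, R, hP, hQA, hRB⟩ := List.sublist_append_iff.1 h1
  obtain ⟨C, D, hY, hQC, hRD⟩ := List.append_sublist_iff.1 (hP ▸ h2)
  have hex : ∃ C D Q R : List α, Y = C ++ D ∧ P = Q ++ R ∧
      Q.Sublist A ∧ Q.Sublist C ∧ R.Sublist B ∧ R.Sublist D :=
    ⟨C, D, Q, R, hY, hP, hQA, hQC, hRB, hRD⟩
  refine ⟨hex, le_antisymm ?_ ?_⟩
  · -- LHS ≤ RHS
    refine csSup_le ⟨P.length, ⟨P, ⟨h1, h2, List.Sublist.refl P⟩, rfl⟩⟩ ?_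
    rintro n ⟨Z, ⟨hZX, hZY, hPZ⟩, rfl⟩
    obtain ⟨Z1, Z2, rfl, hZ1A, hZ2B⟩ := List.sublist_append_iff.1 hZX
    obtain ⟨C', D', hY', hZ1C, hZ2D⟩ := List.append_sublist_iff.1 hZY
    obtain ⟨Q', R', hP', hQ'Z1, hR'Z2⟩ := List.sublist_append_iff.1 hPZ
    have hn : Z1.length + Z2.length ≤ clcsLen A C' Q' + clcsLen B D' R' :=
      Nat.add_le_add (ccs_len_le ⟨hZ1A, hZ1C, hQ'Z1⟩) (ccs_len_le ⟨hZ2B, hZ2D, hR'Z2⟩)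
    calc (Z1 ++ Z2).length = Z1.length + Z2.length := by simp
      _ ≤ clcsLen A C' Q' + clcsLen B D' R' := hn
      _ ≤ _ := by
          apply le_csSup
          · refine ⟨A.length + B.length, ?_⟩
            rintro m ⟨C, D, Q, R, hY, hP, hQA, hQC, hRB, hRD, rfl⟩
            obtain ⟨W1, ⟨hW1A, -, -⟩, hl1⟩ := exists_clcs hQA hQC
            obtain ⟨W2, ⟨hW2B, -, -⟩, hl2⟩ := exists_clcs hRB hRD
            have := hW1A.length_le
            have := hW2B.length_le
            omega
          · exact ⟨C', D', Q', R', hY', hP',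
              hQ'Z1.trans hZ1A, hQ'Z1.trans hZ1C,
              hR'Z2.trans hZ2B, hR'Z2.trans hZ2D, rfl⟩
  · -- RHS ≤ LHS
    refine csSup_le ⟨clcsLen A C Q + clcsLen B D R,
      ⟨C, D, Q, R, hY, hP, hQA, hQC, hRB, hRD, rfl⟩⟩ ?_
    rintro n ⟨C', D', Q', R', hY', hP', hQ'A, hQ'C, hR'B, hR'D, rfl⟩
    obtain ⟨Z1, ⟨hZ1A, hZ1C, hQ'Z1⟩, hl1⟩ := exists_clcs hQ'A hQ'C
    obtain ⟨Z2, ⟨hZ2B, hZ2D, hR'Z2⟩, hl2⟩ := exists_clcs hR'B hR'D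
    have : CCS (A ++ B) Y P (Z1 ++ Z2) := by
      refine ⟨hZ1A.append hZ2B, ?_, ?_⟩
      · rw [hY']; exact hZ1C.append hZ2D
      · rw [hP']; exact hQ'Z1.append hR'Z2
    have := ccs_len_le this
    simp only [List.length_append] at this
    omega
end

section
/- Let X, Y be lists over an alphabet and let c be a character. If X = X' ++ [c] and Y = Y' ++ [c], then every constrained longest common subsequence Z of X and Y with respect to any constraint list P is nonempty and its last element is c. -/
theorem clcs_last_eq_of_ends_match {α : Type*} (X Y X' Y' : List α) (c : α)
    (hX : X = X' ++ [c]) (hY : Y = Y' ++ [c]) :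
    ∀ (P Z : List α), CLCS X Y P Z → Z ≠ [] ∧ Z.getLast? = some c := by
  subst hX hY
  rintro P Z ⟨⟨hZX, hZY, hPZ⟩, hmax⟩
  -- From sublist of an append ending in [c], either Z ends in c or Z <+ X' (resp. Y').
  have key : ∀ (L : List α), Z.Sublist (L ++ [c]) → Z.Sublist L ∨ ∃ Z', Z = Z' ++ [c] := by
    intro L h
    rw [List.sublist_append_iff] at h
    obtain ⟨l₁, l₂, rfl, h₁, h₂⟩ := h
    rcases List.sublist_singleton.mp h₂ with rfl | rfl
    · left; simpa using h₁
    · right; exact ⟨l₁, rfl⟩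
  rcases key X' hZX with hX' | ⟨Z', rfl⟩
  · rcases key Y' hZY with hY' | ⟨Z', rfl⟩
    · -- Z <+ X' and Z <+ Y'; then Z ++ [c] is a longer CCS, contradiction.
      exfalso
      have : (Z ++ [c]).length ≤ Z.length :=
        hmax (Z ++ [c]) ⟨hX'.append (List.Sublist.refl _),
          hY'.append (List.Sublist.refl _), hPZ.trans (List.sublist_append_left _ _)⟩
      simp at this
    · exact ⟨by simp, by simp⟩
  · exact ⟨by simp, by simp⟩
end
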